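/- (Pełczyński decomposition method) Let X and Y be Banach spaces such that X is isomorphic to a complemented subspace of Y, Y is isomorphic to a complemented subspace of X, and both X and Y are isomorphic to their Cartesian squares (X ≅ X ⊕ X and Y ≅ Y ⊕ Y). Then X and Y are isomorphic. -/

import Mathlib

/-- `Z` is isomorphic to a complemented subspace of `W`. -/
def ComplementedIn (Z W : Type*) [NormedAddCommGroup Z] [NormedSpace ℂ Z]
    [NormedAddCommGroup W] [NormedSpace ℂ W] : Prop :=
  ∃ (J : Z →L[ℂ] W) (Q : W →L[ℂ] Z), Q.comp J = ContinuousLinearMap.id ℂ Z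

/-- `T` factors through the space `Z`. -/
def FactorsThrough (Z : Type*) [NormedAddCommGroup Z] [NormedSpace ℂ Z]
    {X Y : Type*} [NormedAddCommGroup X] [NormedSpace ℂ X]
    [NormedAddCommGroup Y] [NormedSpace ℂ Y] (T : X →L[ℂ] Y) : Prop :=
  ∃ (A : X →L[ℂ] Z) (B : Z →L[ℂ] Y), T = B.comp A

/-- If `X` is complemented in `Y` via `J, Q`, then `Y ≃ X × ker Q`. -/
noncomputable def complementedEquivAux {X Y : Type*} [NormedAddCommGroup X] [NormedSpace ℂ X]
    [NormedAddCommGroup Y] [NormedSpace ℂ Y]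
    (J : X →L[ℂ] Y) (Q : Y →L[ℂ] X) (h : Q.comp J = ContinuousLinearMap.id ℂ X) :
    Y ≃L[ℂ] X × (LinearMap.ker (Q : Y →ₗ[ℂ] X)) := by
  have hQJ : ∀ x, Q (J x) = x := fun x => by
    have := ContinuousLinearMap.ext_iff.mp h x
    simpa using this
  exact ContinuousLinearEquiv.equivOfInverse
    (Q.prod ((ContinuousLinearMap.id ℂ Y - J.comp Q).codRestrict (LinearMap.ker (Q : Y →ₗ[ℂ] X))
      (fun y => by simp [LinearMap.mem_ker, hQJ])))
    (J.comp (ContinuousLinearMap.fst ℂ X (LinearMap.ker (Q : Y →ₗ[ℂ] X))) +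
      (LinearMap.ker (Q : Y →ₗ[ℂ] X)).subtypeL.comp (ContinuousLinearMap.snd ℂ X (LinearMap.ker (Q : Y →ₗ[ℂ] X))))
    (fun y => by simp)
    (fun p => by
      obtain ⟨x, k⟩ := p
      have hk : Q (k : Y) = 0 := k.2
      refine Prod.ext ?_ ?_
      · simp [hQJ, hk]
      · apply Subtype.ext
        simp [hQJ, hk])

/-- Pełczyński's decomposition method. -/
theorem pelczynski_decomposition (X Y : Type*) [NormedAddCommGroup X]
    [NormedSpace ℂ X] [CompleteSpace X] [NormedAddCommGroup Y] [NormedSpace ℂ Y]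
    [CompleteSpace Y]
    (hXY : ComplementedIn X Y) (hYX : ComplementedIn Y X)
    (hX : Nonempty (X ≃L[ℂ] X × X)) (hY : Nonempty (Y ≃L[ℂ] Y × Y)) :
    Nonempty (X ≃L[ℂ] Y) := by
  obtain ⟨J₁, Q₁, h₁⟩ := hXY
  obtain ⟨J₂, Q₂, h₂⟩ := hYX
  obtain ⟨eX⟩ := hX
  obtain ⟨eY⟩ := hY
  -- Y ≃ X × F
  let F := LinearMap.ker (Q₁ : Y →ₗ[ℂ] X)
  let e : Y ≃L[ℂ] X × F := complementedEquivAux J₁ Q₁ h₁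
  -- X ≃ Y × G
  let G := LinearMap.ker (Q₂ : X →ₗ[ℂ] Y)
  let f : X ≃L[ℂ] Y × G := complementedEquivAux J₂ Q₂ h₂
  -- X ≃ Y × X
  have eYX : X ≃L[ℂ] Y × X :=
    f.trans <| ((eY.prodCongr (ContinuousLinearEquiv.refl ℂ G)).trans
      ((LinearIsometryEquiv.prodAssoc ℂ Y Y G).toContinuousLinearEquiv.trans
        ((ContinuousLinearEquiv.refl ℂ Y).prodCongr f.symm)))
  -- Y ≃ X × Y
  have eXY : Y ≃L[ℂ] X × Y :=
    e.trans <| ((eX.prodCongr (ContinuousLinearEquiv.refl ℂ F)).trans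
      ((LinearIsometryEquiv.prodAssoc ℂ X X F).toContinuousLinearEquiv.trans
        ((ContinuousLinearEquiv.refl ℂ X).prodCongr e.symm)))
  exact ⟨eYX.trans ((ContinuousLinearEquiv.prodComm ℂ Y X).trans eXY.symm)⟩
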